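/- Let E be a real inner product space with dim E = 3, let ξ ∈ E be a unit vector, and let ψ(U) = ⟨U, ξ⟩. Let R : E → E → E → E be a trilinear map whose Ricci tensor S(V,Y) = tr(U ↦ R(U,V)Y) is symmetric and satisfies S(U,ξ) = 0 for all U. Define R̂(U,V)Y = R(U,V)Y + ψ(Y)(ψ(V)U − ψ(U)V), its Ricci tensor Ŝ(V,Y) = tr(U ↦ R̂(U,V)Y), and the Ricci operator Q̂ by ⟨Q̂V, Y⟩ = Ŝ(V,Y) for all Y. Then Ŝ(U,ξ) = 2ψ(U) for all U ∈ E, and Q̂ξ = 2ξ. -/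

import Mathlib

open RealInnerProductSpace

open TensorProduct in
/-- The trace of the rank-one map `U ↦ ⟪U, ξ⟫ • v` is `⟪v, ξ⟫`. -/
lemma trace_inner_smul {E : Type*} [NormedAddCommGroup E] [InnerProductSpace ℝ E]
    [FiniteDimensional ℝ E] (ξ v : E) :
    LinearMap.trace ℝ E
      (dualTensorHom ℝ E E ((innerSL ℝ ξ).toLinearMap ⊗ₜ[ℝ] v)) = ⟪v, ξ⟫ := by
  simp [real_inner_comm]

open TensorProduct in
/-- General Ricci computation for `Shat`. -/
lemma shat_formula
    {E : Type*} [NormedAddCommGroup E] [InnerProductSpace ℝ E]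
    [FiniteDimensional ℝ E] (hdim : Module.finrank ℝ E = 3)
    (ξ : E)
    (R Rhat : E →ₗ[ℝ] E →ₗ[ℝ] E →ₗ[ℝ] E)
    (hRhat : ∀ U V Y : E,
      Rhat U V Y = R U V Y + ⟪Y, ξ⟫ • (⟪V, ξ⟫ • U - ⟪U, ξ⟫ • V))
    (V Y : E) :
    LinearMap.trace ℝ E ((Rhat.flip V).flip Y)
      = LinearMap.trace ℝ E ((R.flip V).flip Y)
        + 3 * (⟪Y, ξ⟫ * ⟪V, ξ⟫) - ⟪Y, ξ⟫ * ⟪V, ξ⟫ := by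
  have hmap : (Rhat.flip V).flip Y
      = (R.flip V).flip Y + (⟪Y, ξ⟫ * ⟪V, ξ⟫) • LinearMap.id
        - ⟪Y, ξ⟫ • dualTensorHom ℝ E E ((innerSL ℝ ξ).toLinearMap ⊗ₜ[ℝ] V) := by
    ext U
    simp only [LinearMap.flip_apply, LinearMap.sub_apply, LinearMap.add_apply,
      LinearMap.smul_apply, LinearMap.id_apply, dualTensorHom_apply,
      ContinuousLinearMap.coe_coe, innerSL_apply_apply]
    rw [hRhat]
    rw [real_inner_comm ξ U]
    module
  rw [hmap, map_sub, map_add, map_smul, map_smul, LinearMap.trace_id, hdim,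
    trace_inner_smul]
  simp only [smul_eq_mul]
  ring

/-- For the semi-symmetric non-metric connection on a 3-dimensional space, the
Ricci tensor satisfies `Ŝ(U,ξ) = 2ψ(U)` and the Ricci operator `Q̂ξ = 2ξ`. -/
theorem ssnmc_ricci_on_xi
    {E : Type*} [NormedAddCommGroup E] [InnerProductSpace ℝ E]
    [FiniteDimensional ℝ E] (hdim : Module.finrank ℝ E = 3)
    (ξ : E) (hξ : ‖ξ‖ = 1)
    (R Rhat : E →ₗ[ℝ] E →ₗ[ℝ] E →ₗ[ℝ] E)
    (S Shat : E → E → ℝ)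
    (hS : ∀ V Y : E, S V Y = LinearMap.trace ℝ E ((R.flip V).flip Y))
    (hSsymm : ∀ U V : E, S U V = S V U)
    (hSξ : ∀ U : E, S U ξ = 0)
    (hRhat : ∀ U V Y : E,
      Rhat U V Y = R U V Y + ⟪Y, ξ⟫ • (⟪V, ξ⟫ • U - ⟪U, ξ⟫ • V))
    (hShat : ∀ V Y : E, Shat V Y = LinearMap.trace ℝ E ((Rhat.flip V).flip Y))
    (Qhat : E →ₗ[ℝ] E)
    (hQhat : ∀ V Y : E, ⟪Qhat V, Y⟫ = Shat V Y) :
    (∀ U : E, Shat U ξ = 2 * ⟪U, ξ⟫) ∧ Qhat ξ = (2 : ℝ) • ξ := by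
  have hξξ : ⟪ξ, ξ⟫ = (1 : ℝ) := by
    rw [real_inner_self_eq_norm_sq, hξ]; norm_num
  have key : ∀ V Y : E, Shat V Y = S V Y + 3 * (⟪Y, ξ⟫ * ⟪V, ξ⟫) - ⟪Y, ξ⟫ * ⟪V, ξ⟫ := by
    intro V Y
    rw [hShat, shat_formula hdim ξ R Rhat hRhat, ← hS]
  constructor
  · intro U
    rw [key U ξ, hSξ U, hξξ]; ring
  · apply ext_inner_right ℝ
    intro Y
    rw [hQhat, key ξ Y, hSsymm ξ Y, hSξ Y, hξξ, real_inner_smul_left]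
    rw [real_inner_comm ξ Y]
    ring
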